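/- If z₀ satisfies ψ(z₀) = q with ρ̂ < z₀ < ρ, then z₀ is a simple zero of the function q − ψ(z); equivalently, it is impossible that there exist an open ball B around z₀ and a holomorphic function f on B with f(z₀) ≠ 0 and q − ψ(z) = (z − z₀)²·f(z) on B (in particular ψ'(z₀) ≠ 0). -/

import Mathlib

set_option maxHeartbeats 1000000 in

/-- If z₀ satisfies ψ(z₀) = q with ρ̂ < z₀ < ρ, then z₀ is a simple zero of
q − ψ: there do not exist an open ball B around z₀ and a holomorphic function f on B with
f(z₀) ≠ 0 and q − ψ(z) = (z − z₀)²·f(z) on B; in particular ψ'(z₀) ≠ 0. -/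
theorem nig_solution_simple_zero
    (κ σ q θ μ ρ ρhat : ℝ)
    (hκ : 0 < κ) (hσ : 0 < σ) (hq : 0 < q)
    (hρ : ρ = (-θ + Real.sqrt (θ ^ 2 + σ ^ 2 / κ)) / σ ^ 2)
    (hρhat : ρhat = (-θ - Real.sqrt (θ ^ 2 + σ ^ 2 / κ)) / σ ^ 2)
    (ψ : ℂ → ℂ)
    (hψ : ∀ z : ℂ, ψ z =
      1 / (κ : ℂ) -
        (1 / (κ : ℂ)) *
          (1 - 2 * (κ : ℂ) * (θ : ℂ) * z - (κ : ℂ) * (σ : ℂ) ^ 2 * z ^ 2) ^ (1 / 2 : ℂ) +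
        (μ : ℂ) * z)
    (z₀ : ℂ) (hz₀re : z₀.im = 0) (hlo : ρhat < z₀.re) (hhi : z₀.re < ρ)
    (hsol : ψ z₀ = (q : ℂ)) :
    (¬ ∃ (r : ℝ) (f : ℂ → ℂ), 0 < r ∧
        DifferentiableOn ℂ f (Metric.ball z₀ r) ∧ f z₀ ≠ 0 ∧
        ∀ z ∈ Metric.ball z₀ r, (q : ℂ) - ψ z = (z - z₀) ^ 2 * f z) ∧
      deriv ψ z₀ ≠ 0 := by
  obtain ⟨x₀, hx₀⟩ : ∃ x₀ : ℝ, x₀ = z₀.re := ⟨_, rfl⟩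
  have hz : z₀ = (x₀ : ℂ) := Complex.ext hx₀.symm (by simp [hz₀re])
  rw [← hx₀] at hlo hhi
  have hrad : (0:ℝ) ≤ θ ^ 2 + σ ^ 2 / κ := by positivity
  have hr2 : Real.sqrt (θ ^ 2 + σ ^ 2 / κ) ^ 2 = θ ^ 2 + σ ^ 2 / κ := Real.sq_sqrt hrad
  obtain ⟨P, hPdef⟩ : ∃ P : ℝ, P = 1 - 2*κ*θ*x₀ - κ*σ^2*x₀^2 := ⟨_, rfl⟩
  have hP : 0 < P := by
    rw [hρhat] at hlo; rw [hρ] at hhi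
    have hσ2 : (0:ℝ) < σ ^ 2 := by positivity
    have e1 : -θ - Real.sqrt (θ ^ 2 + σ ^ 2 / κ) < σ ^ 2 * x₀ := by
      have := (div_lt_iff₀ hσ2).mp hlo; linarith
    have e2 : σ ^ 2 * x₀ < -θ + Real.sqrt (θ ^ 2 + σ ^ 2 / κ) := by
      have := (lt_div_iff₀ hσ2).mp hhi; linarith
    have key : (θ + σ^2*x₀)^2 < θ ^ 2 + σ ^ 2 / κ := by
      nlinarith [mul_pos (by linarith : (0:ℝ) < Real.sqrt (θ ^ 2 + σ ^ 2 / κ) - (θ + σ^2*x₀))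
        (by linarith : (0:ℝ) < Real.sqrt (θ ^ 2 + σ ^ 2 / κ) + (θ + σ^2*x₀))]
    have key2 : κ * (θ + σ^2*x₀)^2 < κ * (θ ^ 2 + σ ^ 2 / κ) := (mul_lt_mul_iff_right₀ hκ).mpr key
    have hκσ : κ * (σ ^ 2 / κ) = σ ^ 2 := by field_simp
    rw [hPdef]
    nlinarith [hσ2]
  obtain ⟨s, hsdef⟩ : ∃ s : ℝ, s = Real.sqrt P := ⟨_, rfl⟩
  have hs : 0 < s := hsdef ▸ Real.sqrt_pos.2 hP
  have hs2 : s^2 = P := hsdef ▸ Real.sq_sqrt hP.le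
  have hs2' : s^2 = 1 - 2*κ*θ*x₀ - κ*σ^2*x₀^2 := hs2.trans hPdef
  have hinner : (1:ℂ) - 2 * (κ:ℂ) * (θ:ℂ) * z₀ - (κ:ℂ) * (σ:ℂ) ^ 2 * z₀ ^ 2 = (P:ℂ) := by
    rw [hz, hPdef]; push_cast; ring
  have hslit : ((P:ℂ)) ∈ Complex.slitPlane := by
    rw [Complex.mem_slitPlane_iff]; left; simpa using hP
  have hpow : ((P:ℂ)) ^ ((1:ℂ)/2) = (s : ℂ) := by
    have hhalf : ((1:ℂ)/2) = ((1/2 : ℝ) : ℂ) := by norm_num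
    rw [hhalf, ← Complex.ofReal_cpow hP.le]
    norm_cast
    rw [hsdef, Real.sqrt_eq_rpow]
  have hpow' : ((P:ℂ)) ^ ((1:ℂ)/2 - 1) = ((s⁻¹ : ℝ) : ℂ) := by
    have he : ((1:ℂ)/2 - 1) = ((-(1/2) : ℝ) : ℂ) := by norm_num
    rw [he, ← Complex.ofReal_cpow hP.le]
    norm_cast
    rw [Real.rpow_neg hP.le, hsdef, Real.sqrt_eq_rpow]
  have hψz₀ : ψ z₀ = ((1/κ - s/κ + μ*x₀ : ℝ) : ℂ) := by
    rw [hψ z₀, hinner, hpow, hz]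
    push_cast; ring
  have h1 : 1/κ - s/κ + μ*x₀ = q := by
    have := hψz₀.symm.trans hsol
    exact_mod_cast this
  obtain ⟨D, hDdef⟩ : ∃ D : ℝ, D = μ + (θ + σ^2*x₀)/s := ⟨_, rfl⟩
  have hd : HasDerivAt ψ ((D : ℂ)) z₀ := by
    have hinnerD : HasDerivAt (fun z : ℂ => (1:ℂ) - 2 * (κ:ℂ) * (θ:ℂ) * z - (κ:ℂ) * (σ:ℂ) ^ 2 * z ^ 2)
        (-(2 * (κ:ℂ) * (θ:ℂ)) - (κ:ℂ) * (σ:ℂ) ^ 2 * (2 * z₀)) z₀ := by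
      have h1' : HasDerivAt (fun z : ℂ => z) 1 z₀ := hasDerivAt_id z₀
      have h2' : HasDerivAt (fun z : ℂ => z ^ 2) (2 * z₀) z₀ := by
        simpa using hasDerivAt_pow 2 z₀
      have := ((h1'.const_mul (2 * (κ:ℂ) * (θ:ℂ))).const_sub 1).sub
        (h2'.const_mul ((κ:ℂ) * (σ:ℂ) ^ 2))
      exact this.congr_deriv (by ring)
    have hcpow : HasDerivAt
        (fun z : ℂ => ((1:ℂ) - 2 * (κ:ℂ) * (θ:ℂ) * z - (κ:ℂ) * (σ:ℂ) ^ 2 * z ^ 2) ^ ((1:ℂ)/2))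
        (((1:ℂ)/2) * ((1:ℂ) - 2 * (κ:ℂ) * (θ:ℂ) * z₀ - (κ:ℂ) * (σ:ℂ) ^ 2 * z₀ ^ 2) ^ ((1:ℂ)/2 - 1)
          * (-(2 * (κ:ℂ) * (θ:ℂ)) - (κ:ℂ) * (σ:ℂ) ^ 2 * (2 * z₀))) z₀ :=
      hinnerD.cpow_const (by rw [hinner]; exact hslit)
    have hfull := ((hcpow.const_mul ((1:ℂ)/(κ:ℂ))).const_sub ((1:ℂ)/(κ:ℂ))).add
      ((hasDerivAt_id z₀).const_mul (μ:ℂ))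
    have hψeq : ψ = fun z : ℂ => 1 / (κ:ℂ) -
        (1/(κ:ℂ)) * ((1:ℂ) - 2 * (κ:ℂ) * (θ:ℂ) * z - (κ:ℂ) * (σ:ℂ) ^ 2 * z ^ 2) ^ ((1:ℂ)/2) +
        (μ:ℂ) * z := funext hψ
    rw [hψeq]
    refine hfull.congr_deriv ?_
    rw [hinner, hpow', hz]
    have hκ0 : (κ:ℂ) ≠ 0 := by exact_mod_cast hκ.ne'
    have hs0 : (s:ℂ) ≠ 0 := by exact_mod_cast hs.ne'
    rw [hDdef]
    push_cast
    field_simp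
    ring
  have hD0 : D ≠ 0 := by
    intro h2
    rw [hDdef] at h2
    have hμs : μ * s = -(θ + σ^2*x₀) := by
      field_simp at h2
      linarith
    have h1' : 1 - s + μ*x₀*κ = q*κ := by
      field_simp at h1
      linarith
    have key : κ*q*s = s + κ*θ*x₀ - 1 := by
      linear_combination (-s) * h1' + (κ*x₀) * hμs - hs2'
    have hid : (κ*q*s) * (σ^2*(κ*q*s) + 2*σ^2 + 2*κ*θ^2) = -(κ*(θ*(s-1) - σ^2*x₀)^2) := by
      linear_combination (σ^2*(κ*q*s + s + κ*θ*x₀ - 1) + 2*σ^2 + 2*κ*θ^2) * key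
        + (σ^2 + κ*θ^2) * hs2'
    have hu : 0 < κ*q*s := by positivity
    have hpos : 0 < σ^2*(κ*q*s) + 2*σ^2 + 2*κ*θ^2 := by positivity
    nlinarith [mul_pos hu hpos, sq_nonneg (θ*(s-1) - σ^2*x₀)]
  have hderiv : deriv ψ z₀ = (D : ℂ) := hd.deriv
  have hDne : deriv ψ z₀ ≠ 0 := by
    rw [hderiv]; exact_mod_cast hD0
  refine ⟨?_, hDne⟩
  rintro ⟨r, f, hr, hf, hf0, heq⟩
  have hmem : Metric.ball z₀ r ∈ nhds z₀ := Metric.ball_mem_nhds z₀ hr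
  have hfd : DifferentiableAt ℂ f z₀ :=
    hf.differentiableAt (Metric.isOpen_ball.mem_nhds (Metric.mem_ball_self hr))
  have hg : HasDerivAt (fun z : ℂ => (z - z₀) ^ 2 * f z) 0 z₀ := by
    have hsub : HasDerivAt (fun z : ℂ => z - z₀) 1 z₀ := (hasDerivAt_id z₀).sub_const z₀
    have hsq : HasDerivAt (fun z : ℂ => (z - z₀) ^ 2) 0 z₀ := by
      have := hsub.pow 2
      exact this.congr_deriv (by simp)
    have := hsq.mul hfd.hasDerivAt
    exact this.congr_deriv (by simp)
  have hlhs : HasDerivAt (fun z : ℂ => (q:ℂ) - ψ z) (-(D:ℂ)) z₀ := hd.const_sub ((q:ℂ))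
  have hev : (fun z : ℂ => (q:ℂ) - ψ z) =ᶠ[nhds z₀] (fun z : ℂ => (z - z₀) ^ 2 * f z) :=
    Filter.eventually_of_mem hmem heq
  have hDzero : (-(D:ℂ)) = 0 := by
    have ha : deriv (fun z : ℂ => (q:ℂ) - ψ z) z₀ = -(D:ℂ) := hlhs.deriv
    have hb : deriv (fun z : ℂ => (z - z₀) ^ 2 * f z) z₀ = 0 := hg.deriv
    rw [← ha, hev.deriv_eq, hb]
  have : (D:ℂ) = 0 := neg_eq_zero.mp hDzero
  exact hD0 (by exact_mod_cast this)
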